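/- arXiv:0707.0712 — 5 statements merged into one kernel-verified Lean document; each statement's English description precedes it below -/
import Mathlib

section
/- For any two n-by-n complex matrices A and B and integers 0 ≤ k < m, one has (m−k)·Tr[S_{m,k}(A,B)] = m·Tr[A·S_{m−1,k}(A,B)], i.e., Tr[S_{m,k}(A,B)] = (m/(m−k))·Tr[A·S_{m−1,k}(A,B)]. -/
open Finset

/-- The `k`-th Hurwitz product `S_{m,k}(A,B)`: the sum of all words of length `m`
in `A` and `B` in which exactly `k` `B`'s appear. -/
noncomputable def hurwitz {R : Type*} [CommRing R] {n : ℕ} (m k : ℕ)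
    (A B : Matrix (Fin n) (Fin n) R) : Matrix (Fin n) (Fin n) R :=
  ∑ w ∈ Finset.univ.filter
      (fun w : Fin m → Bool => (Finset.univ.filter (fun i => w i = true)).card = k),
    (List.ofFn (fun i => if w i then B else A)).prod

lemma trace_rotate {n : ℕ} (l : List (Matrix (Fin n) (Fin n) ℂ)) (i : ℕ) (h : i ≤ l.length) :
    Matrix.trace ((l.rotate i).prod) = Matrix.trace l.prod := by
  rw [List.rotate_eq_drop_append_take h, List.prod_append, Matrix.trace_mul_comm,
    ← List.prod_append, List.take_append_drop]

lemma ofFn_rot {α : Type*} {M : ℕ} (f : Fin (M+1) → α) (i : Fin (M+1)) :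
    (List.ofFn fun j => f (j + i)) = (List.ofFn f).rotate i.val := by
  apply List.ext_getElem
  · simp
  · intro k h1 h2
    rw [List.getElem_ofFn, List.getElem_rotate, List.getElem_ofFn]
    congr 1
    simp only [List.length_ofFn] at h1 ⊢
    ext
    simp [Fin.add_def, Nat.mod_eq_of_lt h1]

lemma card_rot {M : ℕ} (w : Fin (M+1) → Bool) (i : Fin (M+1)) (hw : w i = false) :
    (univ.filter fun j : Fin M => w (j.succ + i) = true).card
      = (univ.filter fun j => w j = true).card := by
  rw [Finset.card_filter, Finset.card_filter]
  have h1 : ∑ j : Fin (M+1), (if w j = true then 1 else 0)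
      = ∑ j : Fin (M+1), (if w (j + i) = true then 1 else 0) :=
    (Fintype.sum_equiv (Equiv.addRight i) _ _ (fun j => rfl)).symm
  rw [h1, Fin.sum_univ_succ]
  simp [hw]

lemma card_unrot {M : ℕ} (w' : Fin M → Bool) (i : Fin (M+1)) :
    (univ.filter fun j : Fin (M+1) => (Fin.cases false w' (j - i) : Bool) = true).card
      = (univ.filter fun j : Fin M => w' j = true).card := by
  rw [Finset.card_filter, Finset.card_filter]
  have h1 : ∑ j : Fin (M+1), (if (Fin.cases false w' (j - i) : Bool) = true then 1 else 0)
      = ∑ j : Fin (M+1), (if (Fin.cases false w' j : Bool) = true then 1 else 0) :=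
    Fintype.sum_equiv (Equiv.subRight i) _ _ (fun j => rfl)
  rw [h1, Fin.sum_univ_succ]
  simp
  rw [Finset.card_filter]
  congr

lemma key {n : ℕ} (M k : ℕ) (hk : k ≤ M) (A B : Matrix (Fin n) (Fin n) ℂ) :
    ((M:ℂ) + 1 - k) * Matrix.trace (hurwitz (M+1) k A B) =
      ((M:ℂ) + 1) * Matrix.trace (A * hurwitz M k A B) := by
  classical
  rw [hurwitz, hurwitz, Matrix.trace_sum, Finset.mul_sum, Matrix.mul_sum,
    Matrix.trace_sum, Finset.mul_sum]
  have lhs : ∀ w ∈ univ.filter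
      (fun w : Fin (M+1) → Bool => (univ.filter (fun i => w i = true)).card = k),
      ((M:ℂ) + 1 - k) * Matrix.trace (List.ofFn (fun i => if w i then B else A)).prod
        = ∑ _i ∈ univ.filter (fun i => w i = false),
            Matrix.trace (List.ofFn (fun i => if w i then B else A)).prod := by
    intro w hw
    rw [Finset.sum_const, nsmul_eq_mul]
    congr 1
    simp only [mem_filter, mem_univ, true_and] at hw
    have h2 : (univ.filter fun i => w i = false).card = M + 1 - k := by
      have h0 := Finset.card_filter_add_card_filter_not
        (s := (univ : Finset (Fin (M+1)))) (p := fun i => w i = true)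
      have h3 : (univ.filter fun i => ¬ w i = true) = univ.filter fun i => w i = false := by
        simp [Bool.not_eq_true]
      rw [h3] at h0
      simp only [Finset.card_univ, Fintype.card_fin] at h0
      omega
    rw [h2, Nat.cast_sub (by omega)]
    push_cast
    ring
  rw [Finset.sum_congr rfl lhs, Finset.sum_sigma']
  have rhs : ∀ w ∈ univ.filter
      (fun w : Fin M → Bool => (univ.filter (fun i => w i = true)).card = k),
      ((M:ℂ) + 1) * Matrix.trace (A * (List.ofFn (fun i => if w i then B else A)).prod)
        = ∑ _i : Fin (M+1),
            Matrix.trace (A * (List.ofFn (fun i => if w i then B else A)).prod) := by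
    intro w _
    rw [Finset.sum_const, nsmul_eq_mul]
    simp
  rw [Finset.sum_congr rfl rhs, Finset.sum_sigma']
  refine Finset.sum_nbij' (i := fun p => ⟨fun j => p.1 (j.succ + p.2), p.2⟩)
    (j := fun p => ⟨fun j => Fin.cases false p.1 (j - p.2), p.2⟩) ?_ ?_ ?_ ?_ ?_
  · -- forward membership
    rintro ⟨w, i⟩ hp
    simp only [Finset.mem_sigma, mem_filter, mem_univ, true_and] at hp ⊢
    rw [card_rot w i hp.2]
    exact ⟨hp.1, trivial⟩
  · -- backward membership
    rintro ⟨w', i⟩ hp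
    simp only [Finset.mem_sigma, mem_filter, mem_univ, true_and] at hp ⊢
    constructor
    · rw [card_unrot]; exact hp.1
    · show (Fin.cases false w' (i - i) : Bool) = false
      rw [sub_self]
      rfl
  · -- left inverse
    rintro ⟨w, i⟩ hp
    simp only [Finset.mem_sigma, mem_filter, mem_univ, true_and] at hp
    ext1
    · funext j
      have hj : j - i + i = j := sub_add_cancel j i
      have haux : ∀ d : Fin (M+1),
          (Fin.cases false (fun j' => w (j'.succ + i)) d : Bool) = w (d + i) := by
        intro d
        induction d using Fin.cases with
        | zero => rw [Fin.cases_zero, zero_add, hp.2]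
        | succ d => rw [Fin.cases_succ]
      show (Fin.cases false (fun j' => w (j'.succ + i)) (j - i) : Bool) = w j
      rw [haux, hj]
    · rfl
  · -- right inverse
    rintro ⟨w', i⟩ _
    ext1
    · funext j
      show (Fin.cases false w' (j.succ + i - i) : Bool) = w' j
      rw [add_sub_cancel_right]
      exact Fin.cases_succ j
    · rfl
  · -- values agree
    rintro ⟨w, i⟩ hp
    simp only [Finset.mem_sigma, mem_filter, mem_univ, true_and] at hp
    show Matrix.trace (List.ofFn fun j => if w j then B else A).prod
      = Matrix.trace (A * (List.ofFn fun j => if w (j.succ + i) then B else A).prod)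
    rw [← trace_rotate (List.ofFn fun j => if w j then B else A) i.val (by simp only [List.length_ofFn]; exact i.isLt.le),
      ← ofFn_rot (fun j => if w j then B else A) i, List.ofFn_succ, List.prod_cons]
    have h0 : ((0 : Fin (M+1)) + i) = i := zero_add i
    rw [h0, hp.2]
    simp

theorem trace_hurwitz_eq {n m k : ℕ} (hk : k < m)
    (A B : Matrix (Fin n) (Fin n) ℂ) :
    ((m : ℂ) - (k : ℂ)) * Matrix.trace (hurwitz m k A B) =
      (m : ℂ) * Matrix.trace (A * hurwitz (m - 1) k A B) := by
  obtain ⟨M, rfl⟩ := Nat.exists_eq_succ_of_ne_zero (by omega : m ≠ 0)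
  have h := key M k (Nat.lt_succ_iff.mp hk) A B
  simpa [Nat.succ_sub_one, sub_sub] using h
end

section
/- Let B be any real n-by-n matrix, let 0 ≤ k < m, and define f : [0,1]^{n−1} → ℝ by f(x₁,…,x_{n−1}) = Tr[S_{m,k}(diag(1,x₁,…,x_{n−1}), B)]. Suppose a = (a₁,…,a_{n−1}) ∈ [0,1]^{n−1} achieves the minimum of f over [0,1]^{n−1}. Let D = diag(1,d₁,…,d_{n−1}) where d_i = 0 if a_i = 0 and d_i = 1 otherwise, and let A' = diag(1,a₁,…,a_{n−1}). Then f(a₁,…,a_{n−1}) = Tr[S_{m,k}(A',B)] = (m/(m−k))·Tr[D·S_{m−1,k}(A',B)]. -/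
open Matrix Finset

lemma trace_prod_rotate {N : Type*} [Fintype N] [DecidableEq N] {R : Type*} [CommRing R]
    (l : List (Matrix N N R)) (p : ℕ) :
    ((l.rotate p).prod).trace = (l.prod).trace := by
  rcases l with _ | ⟨x, xs⟩
  · simp
  · rw [← List.rotate_mod, List.rotate_eq_drop_append_take
      (Nat.le_of_lt (Nat.mod_lt _ (by simp))),
      List.prod_append, Matrix.trace_mul_comm, ← List.prod_append, List.take_append_drop]

lemma ofFn_add_rotate {α : Type*} {M : ℕ} (g : Fin (M+1) → α) (p : Fin (M+1)) :
    List.ofFn (fun j => g (p + j)) = (List.ofFn g).rotate p.val := by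
  apply List.ext_getElem
  · simp
  · intro i h1 h2
    simp only [List.getElem_ofFn, List.getElem_rotate, List.length_ofFn]
    congr 1
    simp only [List.length_ofFn] at h1 ⊢
    ext
    simp [Fin.add_def, Nat.add_comm]

lemma trace_prod_pivot {N : Type*} [Fintype N] [DecidableEq N] {R : Type*} [CommRing R]
    {M : ℕ} (g : Fin (M+1) → Matrix N N R) (p : Fin (M+1)) :
    Matrix.trace (List.ofFn g).prod
      = Matrix.trace (g p * (List.ofFn (fun j : Fin M => g (p + j.succ))).prod) := by
  rw [← trace_prod_rotate (List.ofFn g) p.val, ← ofFn_add_rotate]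
  rw [List.ofFn_succ]
  simp

lemma count_rotate {M : ℕ} (w : Fin (M+1) → Bool) (p : Fin (M+1)) (hp : w p = false) :
    (Finset.univ.filter (fun i => w i = true)).card
      = (Finset.univ.filter (fun j : Fin M => w (p + j.succ) = true)).card := by
  rw [Finset.card_filter, Finset.card_filter,
    ← Equiv.sum_comp (Equiv.addLeft p) (fun i => if w i = true then (1:ℕ) else 0),
    Fin.sum_univ_succ]
  simp [hp]
  rw [Finset.card_filter]
  congr

lemma key_s6 {nn : ℕ} (M k : ℕ) (A B C : Matrix (Fin nn) (Fin nn) ℝ) :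
    ∑ w ∈ Finset.univ.filter
        (fun w : Fin (M+1) → Bool => (Finset.univ.filter (fun i => w i = true)).card = k),
      ∑ p ∈ Finset.univ.filter (fun p => w p = false),
        Matrix.trace (List.ofFn (fun i => if i = p then C else if w i then B else A)).prod
      = ((M:ℝ)+1) * Matrix.trace (C * hurwitz M k A B) := by
  have step1 : ∀ (w : Fin (M+1) → Bool) (p : Fin (M+1)),
      Matrix.trace (List.ofFn (fun i => if i = p then C else if w i then B else A)).prod
        = Matrix.trace (C * (List.ofFn (fun j : Fin M =>
            if w (p + j.succ) then B else A)).prod) := by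
    intro w p
    rw [trace_prod_pivot (fun i => if i = p then C else if w i then B else A) p, if_pos rfl]
    have hfun : (fun j : Fin M => if p + j.succ = p then C else if w (p + j.succ) = true then B else A)
        = (fun j : Fin M => if w (p + j.succ) = true then B else A) := by
      funext j
      rw [if_neg (by simp [Fin.succ_ne_zero] : p + j.succ ≠ p)]
    rw [hfun]
  have rhs : ∑ p : Fin (M+1), ∑ v ∈ Finset.univ.filter
        (fun v : Fin M → Bool => (Finset.univ.filter (fun i => v i = true)).card = k),
      Matrix.trace (C * (List.ofFn (fun j => if v j then B else A)).prod)
      = ((M:ℝ)+1) * Matrix.trace (C * hurwitz M k A B) := by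
    rw [Finset.sum_const, Finset.card_univ, Fintype.card_fin, nsmul_eq_mul]
    push_cast
    congr 1
    rw [hurwitz, Matrix.mul_sum, Matrix.trace_sum]
  rw [← rhs]
  rw [Finset.sum_congr rfl (fun w hw => Finset.sum_congr rfl (fun p hp => step1 w p))]
  rw [Finset.sum_sigma', Finset.sum_sigma']
  refine Finset.sum_nbij' (i := fun x => ⟨x.2, fun j => x.1 (x.2 + j.succ)⟩)
    (j := fun y => ⟨fun i => (Fin.cons false y.2 : Fin (M+1) → Bool) (i - y.1), y.1⟩) ?_ ?_ ?_ ?_ ?_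
  · rintro ⟨w, p⟩ h
    simp only [Finset.mem_sigma, Finset.mem_filter, Finset.mem_univ, true_and] at h ⊢
    exact (count_rotate w p h.2).symm.trans h.1
  · rintro ⟨p, v⟩ h
    simp only [Finset.mem_sigma, Finset.mem_filter, Finset.mem_univ, true_and] at h ⊢
    have hw : (fun i => (Fin.cons false v : Fin (M+1) → Bool) (i - p)) p = false := by
      simp [sub_self]
    refine ⟨?_, hw⟩
    rw [count_rotate _ p hw]
    have : ∀ j : Fin M, (Fin.cons false v : Fin (M+1) → Bool) (p + j.succ - p) = v j := by
      intro j
      rw [add_sub_cancel_left, Fin.cons_succ]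
    calc (Finset.univ.filter (fun j : Fin M => (Fin.cons false v : Fin (M+1) → Bool) (p + j.succ - p) = true)).card
        = (Finset.univ.filter (fun j : Fin M => v j = true)).card := by
          simp only [this]
      _ = k := h
  · rintro ⟨w, p⟩ h
    simp only [Finset.mem_sigma, Finset.mem_filter, Finset.mem_univ, true_and] at h
    refine Sigma.ext ?_ HEq.rfl
    funext i
    dsimp only
    have hi : p + (i - p) = i := add_sub_cancel p i
    rcases Fin.eq_zero_or_eq_succ (i - p) with hz | ⟨j, hj⟩
    · rw [hz, Fin.cons_zero]
      rw [hz, add_zero] at hi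
      rw [← hi]; exact h.2.symm
    · rw [hj, Fin.cons_succ, ← hj, hi]
  · rintro ⟨p, v⟩ h
    refine Sigma.ext rfl (heq_of_eq ?_)
    funext j
    dsimp only
    rw [add_sub_cancel_left, Fin.cons_succ]
  · rintro ⟨w, p⟩ h
    rfl

section DerivStuff

attribute [local instance] Matrix.linftyOpNormedAddCommGroup Matrix.linftyOpNormedSpace
  Matrix.linftyOpNormedRing Matrix.linftyOpNormedAlgebra

lemma hasDerivAt_prod_ofFn {𝔸 : Type*} [NormedRing 𝔸] [NormedAlgebra ℝ 𝔸] {M : ℕ}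
    (c : Fin M → ℝ → 𝔸) (d : Fin M → 𝔸) (t : ℝ) (h : ∀ i, HasDerivAt (c i) (d i) t) :
    HasDerivAt (fun s => (List.ofFn (fun i => c i s)).prod)
      (∑ p : Fin M, (List.ofFn (fun i => if i = p then d p else c i t)).prod) t := by
  induction M with
  | zero => simpa using hasDerivAt_const t (1 : 𝔸)
  | succ M ih =>
    have htail := ih (fun i => c i.succ) (fun i => d i.succ) (fun i => h i.succ)
    have hmul := (h 0).mul htail
    have heq : (fun s => (List.ofFn (fun i => c i s)).prod)
        = fun s => c 0 s * (List.ofFn (fun i : Fin M => c i.succ s)).prod := by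
      funext s; rw [List.ofFn_succ, List.prod_cons]
    rw [heq]
    convert hmul using 1
    · rfl
    rw [Fin.sum_univ_succ, Finset.mul_sum]
    congr 1
    · have hfe : (fun i : Fin M => if i.succ = (0 : Fin (M+1)) then d 0 else c i.succ t)
          = fun i => c i.succ t := by
        funext i; rw [if_neg (Fin.succ_ne_zero i)]
      rw [List.ofFn_succ, List.prod_cons, if_pos rfl, hfe]
    · apply Finset.sum_congr rfl
      intro p _
      have hfe : (fun i : Fin M => if i.succ = p.succ then d p.succ else c i.succ t)
          = fun i => if i = p then d p.succ else c i.succ t := by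
        funext i
        by_cases hip : i = p
        · subst hip; rw [if_pos rfl, if_pos rfl]
        · rw [if_neg (by simpa [Fin.succ_inj] using hip), if_neg hip]
      rw [List.ofFn_succ, List.prod_cons, if_neg (Ne.symm (Fin.succ_ne_zero p)), hfe]

lemma hasDerivAt_trace {nn : ℕ} {F : ℝ → Matrix (Fin nn) (Fin nn) ℝ}
    {F' : Matrix (Fin nn) (Fin nn) ℝ} {t : ℝ} (h : HasDerivAt F F' t) :
    HasDerivAt (fun s => Matrix.trace (F s)) (Matrix.trace F') t := by
  have := ((LinearMap.toContinuousLinearMap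
    (Matrix.traceLinearMap (Fin nn) ℝ ℝ)).hasFDerivAt).comp_hasDerivAt t h
  exact this

lemma hasDerivAt_phi {nn M k : ℕ} (B : Matrix (Fin nn) (Fin nn) ℝ)
    (Adiag : ℝ → Matrix (Fin nn) (Fin nn) ℝ) (E : Matrix (Fin nn) (Fin nn) ℝ) (t : ℝ)
    (hA : HasDerivAt Adiag E t) :
    HasDerivAt (fun s => Matrix.trace (hurwitz (M+1) k (Adiag s) B))
      (((M:ℝ)+1) * Matrix.trace (E * hurwitz M k (Adiag t) B)) t := by
  have hkey := key_s6 M k (Adiag t) B E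
  have main : HasDerivAt (fun s => Matrix.trace (hurwitz (M+1) k (Adiag s) B))
      (∑ w ∈ Finset.univ.filter
        (fun w : Fin (M+1) → Bool => (Finset.univ.filter (fun i => w i = true)).card = k),
       ∑ p : Fin (M+1),
        Matrix.trace (List.ofFn (fun i => if i = p then (if w p then 0 else E)
          else if w i then B else Adiag t)).prod) t := by
    have hfun : (fun s => Matrix.trace (hurwitz (M+1) k (Adiag s) B))
        = fun s => ∑ w ∈ Finset.univ.filter
            (fun w : Fin (M+1) → Bool => (Finset.univ.filter (fun i => w i = true)).card = k),
          Matrix.trace (List.ofFn (fun i => if w i then B else Adiag s)).prod := by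
      funext s
      rw [hurwitz, Matrix.trace_sum]
    rw [hfun]
    apply HasDerivAt.fun_sum
    intro w _
    have hw : HasDerivAt (fun s => (List.ofFn (fun i => if w i then B else Adiag s)).prod)
        (∑ p : Fin (M+1), (List.ofFn (fun i => if i = p then (if w p then 0 else E)
          else if w i then B else Adiag t)).prod) t := by
      have := hasDerivAt_prod_ofFn (fun i s => if w i then B else Adiag s)
        (fun i => if w i then 0 else E) t (fun i => by
          by_cases hwi : w i
          · simp only [hwi, if_true]; exact hasDerivAt_const t B
          · simp only [hwi, if_false]; exact hA)
      exact this
    have := hasDerivAt_trace hw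
    rwa [Matrix.trace_sum] at this
  convert main using 1
  rw [← hkey]
  apply Finset.sum_congr rfl
  intro w hw
  simp only [Finset.mem_filter, Finset.mem_univ, true_and] at hw
  rw [eq_comm]
  rw [← Finset.sum_filter_add_sum_filter_not Finset.univ (fun p => w p = false)]
  have hzero : ∀ p ∈ Finset.univ.filter (fun p => ¬ w p = false),
      Matrix.trace (List.ofFn (fun i => if i = p then (if w p then 0 else E)
        else if w i then B else Adiag t)).prod = 0 := by
    intro p hp
    simp only [Finset.mem_filter, Finset.mem_univ, true_and, Bool.not_eq_false] at hp
    rw [trace_prod_pivot (fun i => if i = p then (if w p then 0 else E)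
        else if w i then B else Adiag t) p, if_pos rfl, hp, if_pos rfl, zero_mul,
      Matrix.trace_zero]
  rw [Finset.sum_congr rfl hzero, Finset.sum_const, smul_zero, add_zero]
  apply Finset.sum_congr rfl
  intro p hp
  simp only [Finset.mem_filter, Finset.mem_univ, true_and] at hp
  rw [hp]
  simp only [Bool.false_eq_true, if_false]


lemma euler {nn : ℕ} (M k : ℕ) (A B : Matrix (Fin nn) (Fin nn) ℝ) :
    ((M + 1 - k : ℕ) : ℝ) * Matrix.trace (hurwitz (M+1) k A B)
      = ((M:ℝ)+1) * Matrix.trace (A * hurwitz M k A B) := by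
  rw [← key_s6 M k A B A]
  rw [hurwitz, Matrix.trace_sum, Finset.mul_sum]
  apply Finset.sum_congr rfl
  intro w hw
  simp only [Finset.mem_filter, Finset.mem_univ, true_and] at hw
  have hword : ∀ p ∈ Finset.univ.filter (fun p => w p = false),
      Matrix.trace (List.ofFn (fun i => if i = p then A else if w i then B else A)).prod
        = Matrix.trace (List.ofFn (fun i => if w i then B else A)).prod := by
    intro p hp
    simp only [Finset.mem_filter, Finset.mem_univ, true_and] at hp
    have hfe : (fun i => if i = p then A else if w i then B else A)
        = fun i => if w i then B else A := by
      funext i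
      by_cases hip : i = p
      · subst hip; rw [if_pos rfl, hp]; simp
      · rw [if_neg hip]
    rw [hfe]
  rw [Finset.sum_congr rfl hword, Finset.sum_const, nsmul_eq_mul]
  congr 2
  have h2 : (Finset.univ.filter (fun p => ¬ (w p = true))).card
      = (M + 1) - k := by
    have := Finset.card_filter_add_card_filter_not
      (s := (Finset.univ : Finset (Fin (M+1)))) (p := fun p => w p = true)
    rw [hw, Finset.card_univ, Fintype.card_fin] at this
    omega
  rw [← h2]
  congr 1
  apply Finset.filter_congr
  intro p _
  simp

lemma trace_diagonal_mul' {nn : ℕ} (v : Fin nn → ℝ) (H : Matrix (Fin nn) (Fin nn) ℝ) :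
    Matrix.trace (Matrix.diagonal v * H) = ∑ i, v i * H i i := by
  rw [Matrix.trace]
  apply Finset.sum_congr rfl
  intro i _
  rw [Matrix.diag]
  rw [Matrix.diagonal_mul]

lemma diag_update_hasDerivAt {n : ℕ} (a : Fin n → ℝ) (j : Fin n) (t : ℝ) :
    HasDerivAt (fun s : ℝ => (Matrix.diagonal (Fin.cons 1 (Function.update a j s)) :
        Matrix (Fin (n+1)) (Fin (n+1)) ℝ))
      (Matrix.diagonal (Pi.single j.succ 1)) t := by
  have hfun : (fun s : ℝ => (Matrix.diagonal (Fin.cons 1 (Function.update a j s)) :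
        Matrix (Fin (n+1)) (Fin (n+1)) ℝ))
      = fun s : ℝ => Matrix.diagonal (Fin.cons 1 (Function.update a j 0))
          + s • Matrix.diagonal (Pi.single j.succ 1) := by
    funext s
    rw [← Matrix.diagonal_smul, Matrix.diagonal_add]
    apply congrArg Matrix.diagonal
    funext i
    induction i using Fin.cases with
    | zero => simp [Pi.single_apply, (Fin.succ_ne_zero j).symm]
    | succ i' =>
      simp only [Fin.cons_succ, Pi.add_apply, Pi.smul_apply, Pi.single_apply,
        Function.update_apply, Fin.succ_inj, smul_eq_mul]
      by_cases h : i' = j <;> simp [h]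
  rw [hfun]
  have := (hasDerivAt_const t (Matrix.diagonal (Fin.cons 1 (Function.update a j 0)) :
      Matrix (Fin (n+1)) (Fin (n+1)) ℝ)).add
    ((hasDerivAt_id t).smul_const (Matrix.diagonal (Pi.single j.succ 1) :
      Matrix (Fin (n+1)) (Fin (n+1)) ℝ))
  simp only [zero_add, one_smul] at this
  exact this

lemma interior_zero {n M k : ℕ} (B : Matrix (Fin (n+1)) (Fin (n+1)) ℝ)
    (a : Fin n → ℝ) (ha : ∀ i, a i ∈ Set.Icc (0 : ℝ) 1)
    (hmin : ∀ x : Fin n → ℝ, (∀ i, x i ∈ Set.Icc (0 : ℝ) 1) →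
      Matrix.trace (hurwitz (M+1) k (Matrix.diagonal (Fin.cons 1 a)) B)
        ≤ Matrix.trace (hurwitz (M+1) k (Matrix.diagonal (Fin.cons 1 x)) B))
    (j : Fin n) (h0 : 0 < a j) (h1 : a j < 1) :
    (hurwitz M k (Matrix.diagonal (Fin.cons 1 a)) B) j.succ j.succ = 0 := by
  have hderiv : HasDerivAt
      (fun s => Matrix.trace (hurwitz (M+1) k
        (Matrix.diagonal (Fin.cons 1 (Function.update a j s))) B))
      (((M:ℝ)+1) * Matrix.trace (Matrix.diagonal (Pi.single j.succ 1) *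
        hurwitz M k (Matrix.diagonal (Fin.cons 1 (Function.update a j (a j)))) B)) (a j) :=
    hasDerivAt_phi B _ _ (a j) (diag_update_hasDerivAt a j (a j))
  rw [Function.update_eq_self] at hderiv
  have hlocmin : IsLocalMin (fun s => Matrix.trace (hurwitz (M+1) k
      (Matrix.diagonal (Fin.cons 1 (Function.update a j s))) B)) (a j) := by
    have hioo : Set.Ioo (0:ℝ) 1 ∈ nhds (a j) := Ioo_mem_nhds h0 h1
    refine Filter.eventually_of_mem hioo ?_
    intro t ht
    have hbox : ∀ i, Function.update a j t i ∈ Set.Icc (0:ℝ) 1 := by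
      intro i
      rcases eq_or_ne i j with rfl | hij
      · rw [Function.update_self]; exact ⟨le_of_lt ht.1, le_of_lt ht.2⟩
      · rw [Function.update_of_ne hij]; exact ha i
    have := hmin (Function.update a j t) hbox
    simpa [Function.update_eq_self] using this
  have h0' := hlocmin.hasDerivAt_eq_zero hderiv
  have htr : Matrix.trace (Matrix.diagonal (Pi.single j.succ (1:ℝ)) *
      hurwitz M k (Matrix.diagonal (Fin.cons 1 a)) B)
      = (hurwitz M k (Matrix.diagonal (Fin.cons 1 a)) B) j.succ j.succ := by
    rw [trace_diagonal_mul', Finset.sum_eq_single j.succ]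
    · rw [Pi.single_eq_same, one_mul]
    · intro b _ hb; rw [Pi.single_eq_of_ne hb, zero_mul]
    · intro hb; exact absurd (Finset.mem_univ _) hb
  rw [htr] at h0'
  have hM : ((M:ℝ)+1) ≠ 0 := by positivity
  exact (mul_eq_zero.mp h0').resolve_left hM

end DerivStuff

theorem trace_hurwitz_min_singular {n m k : ℕ} (hk : k < m)
    (B : Matrix (Fin (n + 1)) (Fin (n + 1)) ℝ)
    (f : (Fin n → ℝ) → ℝ)
    (hf : f = fun x => Matrix.trace (hurwitz m k (Matrix.diagonal (Fin.cons 1 x)) B))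
    (a : Fin n → ℝ) (ha : ∀ i, a i ∈ Set.Icc (0 : ℝ) 1)
    (hmin : ∀ x : Fin n → ℝ, (∀ i, x i ∈ Set.Icc (0 : ℝ) 1) → f a ≤ f x)
    (A' : Matrix (Fin (n + 1)) (Fin (n + 1)) ℝ)
    (hA' : A' = Matrix.diagonal (Fin.cons 1 a))
    (D : Matrix (Fin (n + 1)) (Fin (n + 1)) ℝ)
    (hD : D = Matrix.diagonal (Fin.cons 1 (fun i => if a i = 0 then 0 else 1))) :
    f a = Matrix.trace (hurwitz m k A' B) ∧
      Matrix.trace (hurwitz m k A' B) =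
        ((m : ℝ) / ((m : ℝ) - (k : ℝ))) *
          Matrix.trace (D * hurwitz (m - 1) k A' B) := by
  subst hf hA' hD
  obtain ⟨M, rfl⟩ : ∃ M, m = M + 1 := ⟨m - 1, by omega⟩
  refine ⟨rfl, ?_⟩
  have hzero : ∀ j : Fin n, 0 < a j → a j < 1 →
      (hurwitz M k (Matrix.diagonal (Fin.cons 1 a)) B) j.succ j.succ = 0 :=
    fun j h0 h1 => interior_zero B a ha (fun x hx => hmin x hx) j h0 h1
  have heul := euler M k (Matrix.diagonal (Fin.cons 1 a)) B
  have hAD : Matrix.trace (Matrix.diagonal (Fin.cons 1 a) *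
        hurwitz M k (Matrix.diagonal (Fin.cons 1 a)) B)
      = Matrix.trace (Matrix.diagonal (Fin.cons 1 (fun i => if a i = 0 then 0 else 1)) *
        hurwitz M k (Matrix.diagonal (Fin.cons 1 a)) B) := by
    rw [trace_diagonal_mul', trace_diagonal_mul']
    apply Finset.sum_congr rfl
    intro i _
    induction i using Fin.cases with
    | zero => simp
    | succ j =>
      simp only [Fin.cons_succ]
      rcases eq_or_ne (a j) 0 with h0 | h0
      · simp [h0]
      rcases eq_or_ne (a j) 1 with h1 | h1
      · rw [h1, if_neg (by norm_num : (1:ℝ) ≠ 0)]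
      · have hz := hzero j (lt_of_le_of_ne (ha j).1 (Ne.symm h0))
          (lt_of_le_of_ne (ha j).2 h1)
        rw [hz, if_neg h0]
        ring
  rw [hAD] at heul
  have hsub : ((M + 1 - k : ℕ) : ℝ) = ((M:ℝ) + 1) - (k:ℝ) := by
    rw [Nat.cast_sub (by omega : k ≤ M + 1)]
    push_cast
    ring
  rw [hsub] at heul
  have hne : ((M:ℝ) + 1) - (k:ℝ) ≠ 0 := by
    have hkM : (k:ℝ) < (M:ℝ) + 1 := by exact_mod_cast hk
    linarith
  simp only [Nat.add_sub_cancel]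
  push_cast
  rw [div_mul_eq_mul_div, eq_div_iff hne, mul_comm]
  linarith [heul]
end

section
/- Fix n and m ≥ 1. Suppose that the polynomial Tr[(A+tB)^{m−1}] has all positive coefficients for every pair of n-by-n real symmetric positive definite matrices A and B. If p(t) = Tr[(A+tB)^m] has all positive coefficients whenever A and B are nonzero singular n-by-n real symmetric positive semidefinite matrices, then p(t) = Tr[(A+tB)^m] has all positive coefficients whenever A and B are arbitrary n-by-n real symmetric positive definite matrices. -/
open Polynomial Matrix Finset

namespace HurwitzAux

variable {n : ℕ}

/-- apply `C` entrywise, as a ring hom. -/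
noncomputable def φ : Matrix (Fin n) (Fin n) ℝ →+* Matrix (Fin n) (Fin n) ℝ[X] :=
  (Polynomial.C : ℝ →+* ℝ[X]).mapMatrix

/-- number of `true`s in a boolean word. -/
def cnt {m : ℕ} (w : Fin m → Bool) : ℕ := (Finset.univ.filter (fun i => w i = true)).card

/-- the word in `M`, `N` determined by `w`. -/
def word {R : Type*} [CommRing R] {m : ℕ} (M N : Matrix (Fin n) (Fin n) R)
    (w : Fin m → Bool) : Matrix (Fin n) (Fin n) R :=
  (List.ofFn (fun i => if w i then N else M)).prod

lemma cnt_le {m : ℕ} (w : Fin m → Bool) : cnt w ≤ m := by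
  simpa [cnt] using Finset.card_filter_le Finset.univ (fun i => w i = true)

lemma cnt_cons {m : ℕ} (b : Bool) (w : Fin m → Bool) :
    cnt (Fin.cons b w) = (if b then 1 else 0) + cnt w := by
  unfold cnt
  rw [Finset.card_filter, Finset.card_filter, Fin.sum_univ_succ]
  cases b <;> simp

lemma cnt_cons_true {m : ℕ} (w : Fin m → Bool) : cnt (Fin.cons true w) = 1 + cnt w := by
  simpa using cnt_cons true w

lemma cnt_cons_false {m : ℕ} (w : Fin m → Bool) : cnt (Fin.cons false w) = cnt w := by
  simpa using cnt_cons false w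

lemma word_cons {R : Type*} [CommRing R] {m : ℕ} (M N : Matrix (Fin n) (Fin n) R)
    (b : Bool) (w : Fin m → Bool) :
    word M N (Fin.cons b w) = (if b then N else M) * word M N w := by
  cases b <;> simp [word, List.ofFn_succ]

lemma expand_pow {R : Type*} [CommRing R] (M N : Matrix (Fin n) (Fin n) R) (r : R) :
    ∀ m : ℕ, (M + r • N) ^ m = ∑ w : Fin m → Bool, r ^ cnt w • word M N w
  | 0 => by
    simp [word, cnt]
  | (m+1) => by
    rw [pow_succ', expand_pow M N r m]
    rw [← (Fin.consEquiv (fun _ : Fin (m+1) => Bool)).sum_comp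
      (fun w => r ^ cnt w • word M N w)]
    rw [Fintype.sum_prod_type, Fintype.sum_bool]
    simp only [show ∀ (b : Bool) (y : Fin m → Bool),
        (Fin.consEquiv fun _ : Fin (m+1) => Bool) (b, y) = Fin.cons b y from fun _ _ => rfl,
      cnt_cons_true, cnt_cons_false, word_cons]
    simp only [if_true, Bool.false_eq_true, if_false, pow_add, pow_one]
    rw [add_mul, Finset.mul_sum, Finset.mul_sum, add_comm]
    congr 1
    · exact Finset.sum_congr rfl fun w _ => by
        rw [smul_mul_assoc, mul_smul_comm, smul_smul, mul_comm r]
    · exact Finset.sum_congr rfl fun w _ => mul_smul_comm _ _ _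


lemma trace_map (M : Matrix (Fin n) (Fin n) ℝ) :
    (φ M).trace = Polynomial.C M.trace := by
  simp [φ, Matrix.trace, Matrix.diag, RingHom.mapMatrix_apply, Matrix.map_apply, map_sum]

lemma phi_word {m : ℕ} (A B : Matrix (Fin n) (Fin n) ℝ) (w : Fin m → Bool) :
    φ (word A B w) = word (φ A) (φ B) w := by
  rw [word, word, map_list_prod, List.map_ofFn]
  exact congrArg (fun l => List.prod (List.ofFn l))
    (funext fun i => by simp only [Function.comp_apply, apply_ite φ])

noncomputable def hurwitz' {R : Type*} [CommRing R] (m k : ℕ)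
    (A B : Matrix (Fin n) (Fin n) R) : Matrix (Fin n) (Fin n) R :=
  ∑ w ∈ Finset.univ.filter (fun w : Fin m → Bool => cnt w = k), word A B w

lemma coeff_trace_pow (A B : Matrix (Fin n) (Fin n) ℝ) (m k : ℕ) :
    ((φ A + (X : ℝ[X]) • φ B) ^ m).trace.coeff k = (hurwitz' m k A B).trace := by
  rw [expand_pow, trace_sum, hurwitz', trace_sum]
  have h1 : ∀ w : Fin m → Bool,
      ((X : ℝ[X]) ^ cnt w • word (φ A) (φ B) w).trace
        = Polynomial.C ((word A B w).trace) * (X : ℝ[X]) ^ cnt w := by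
    intro w
    rw [Matrix.trace_smul, ← phi_word, trace_map, smul_eq_mul, mul_comm]
  rw [Finset.sum_congr rfl fun w _ => h1 w, Polynomial.finset_sum_coeff]
  simp only [Polynomial.coeff_C_mul_X_pow]
  rw [Finset.sum_filter]
  exact Finset.sum_congr rfl fun w _ => by
    by_cases h : cnt w = k
    · simp [h]
    · simp [h, Ne.symm h]


lemma smul_one_commute (q : ℝ[X]) (M : Matrix (Fin n) (Fin n) ℝ[X]) :
    Commute (q • (1 : Matrix (Fin n) (Fin n) ℝ[X])) M := by
  unfold Commute SemiconjBy
  rw [smul_mul_assoc, one_mul, mul_smul_comm, mul_one]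

lemma smul_one_mul' (q : ℝ[X]) (M : Matrix (Fin n) (Fin n) ℝ[X]) :
    (q • (1 : Matrix (Fin n) (Fin n) ℝ[X])) * M = q • M := by
  rw [smul_mul_assoc, one_mul]

lemma map_smul_one (c : ℝ) :
    φ (c • (1 : Matrix (Fin n) (Fin n) ℝ))
      = Polynomial.C c • (1 : Matrix (Fin n) (Fin n) ℝ[X]) := by
  ext i j
  by_cases h : i = j <;>
    simp [φ, RingHom.mapMatrix_apply, Matrix.map_apply, Matrix.one_apply, h]

lemma shift_eq (A B : Matrix (Fin n) (Fin n) ℝ) (c d : ℝ) :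
    φ (A - c • 1) + (X : ℝ[X]) • φ (B - d • 1)
      = (φ A + (X : ℝ[X]) • φ B) - (Polynomial.C c + Polynomial.C d * X) • 1 := by
  rw [map_sub, map_sub, map_smul_one, map_smul_one, smul_sub, smul_smul, add_smul,
    mul_comm (Polynomial.C d) X]
  abel

lemma trace_pow_shift (A B : Matrix (Fin n) (Fin n) ℝ) (u : ℝ[X]) (s : ℝ) (p : ℕ) :
    (((φ A + (X : ℝ[X]) • φ B) - (s • u) • 1) ^ p).trace
      = ∑ i ∈ Finset.range (p+1),
          ((p.choose i : ℝ) * (-s) ^ i) • (u ^ i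
            * ((φ A + (X : ℝ[X]) • φ B) ^ (p - i)).trace) := by
  set Y := φ A + (X : ℝ[X]) • φ B with hY
  have h : Y - (s • u) • 1 = ((-(s • u)) • (1 : Matrix (Fin n) (Fin n) ℝ[X])) + Y := by
    rw [neg_smul]; abel
  rw [h, (smul_one_commute (-(s • u)) Y).add_pow, trace_sum]
  refine Finset.sum_congr rfl fun i hi => ?_
  rw [_root_.smul_pow, one_pow, ← neg_smul s u, _root_.smul_pow, smul_one_mul',
    smul_mul_assoc, Matrix.trace_smul, smul_eq_mul, Matrix.trace_mul_comm,
    ← nsmul_eq_mul, Matrix.trace_smul]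
  rw [nsmul_eq_mul, ← Polynomial.C_eq_natCast, smul_mul_assoc]
  rw [mul_left_comm (u ^ i), ← Polynomial.smul_eq_C_mul, smul_comm, smul_smul, mul_comm]


lemma key_repr (A B : Matrix (Fin n) (Fin n) ℝ) (c d : ℝ) (m k : ℕ) :
    (hurwitz' m k (A - c • 1) (B - d • 1)).trace
      = ((((φ A + (X : ℝ[X]) • φ B) - (Polynomial.C c + Polynomial.C d * X) • 1)) ^ m).trace.coeff
          k := by
  rw [← coeff_trace_pow, shift_eq]

lemma conj_pow (U D : Matrix (Fin n) (Fin n) ℝ) (hU : U * star U = 1) (hU' : star U * U = 1) :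
    ∀ k : ℕ, (U * D * star U) ^ k = U * D ^ k * star U
  | 0 => by rw [pow_zero, pow_zero, mul_one, hU]
  | (k+1) => by
    rw [pow_succ, conj_pow U D hU hU' k, pow_succ]
    calc U * D ^ k * star U * (U * D * star U)
        = U * D ^ k * ((star U * U) * (D * star U)) := by simp only [Matrix.mul_assoc]
      _ = U * (D ^ k * D) * star U := by rw [hU', Matrix.one_mul]; simp only [Matrix.mul_assoc]

lemma trace_conj (U D : Matrix (Fin n) (Fin n) ℝ) (hU' : star U * U = 1) :
    (U * D * star U).trace = D.trace := by
  rw [Matrix.trace_mul_comm, ← Matrix.mul_assoc, hU', Matrix.one_mul]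

section spectral

variable {N : Matrix (Fin n) (Fin n) ℝ}

lemma eigen_decomp (hH : N.IsHermitian) :
    N = (hH.eigenvectorUnitary : Matrix (Fin n) (Fin n) ℝ)
        * Matrix.diagonal hH.eigenvalues
        * star (hH.eigenvectorUnitary : Matrix (Fin n) (Fin n) ℝ) := by
  have := hH.spectral_theorem
  simpa [RCLike.ofReal_real_eq_id] using this

lemma trace_pow_pos (hN : N.PosDef) (hn : 0 < n) (k : ℕ) : 0 < (N ^ k).trace := by
  haveI : Nonempty (Fin n) := ⟨⟨0, hn⟩⟩
  have hH := hN.isHermitian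
  set U := (hH.eigenvectorUnitary : Matrix (Fin n) (Fin n) ℝ) with hUdef
  have hU : U * star U = 1 := (Matrix.mem_unitaryGroup_iff).mp hH.eigenvectorUnitary.2
  have hU' : star U * U = 1 := (Matrix.mem_unitaryGroup_iff').mp hH.eigenvectorUnitary.2
  rw [eigen_decomp hH, conj_pow U _ hU hU', trace_conj _ _ hU', Matrix.diagonal_pow,
    Matrix.trace_diagonal]
  exact Finset.sum_pos (fun i _ => pow_pos (hN.eigenvalues_pos i) k) Finset.univ_nonempty

lemma exists_sub_smul (hN : N.PosDef) (hn : 0 < n) :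
    ∃ a : ℝ, 0 < a ∧ (N - a • 1).PosSemidef ∧ (N - a • 1).det = 0 := by
  haveI : Nonempty (Fin n) := ⟨⟨0, hn⟩⟩
  have hH := hN.isHermitian
  set U := (hH.eigenvectorUnitary : Matrix (Fin n) (Fin n) ℝ) with hUdef
  have hU : U * star U = 1 := (Matrix.mem_unitaryGroup_iff).mp hH.eigenvectorUnitary.2
  have hU' : star U * U = 1 := (Matrix.mem_unitaryGroup_iff').mp hH.eigenvectorUnitary.2
  obtain ⟨i₀, -, hmin⟩ := Finset.exists_min_image Finset.univ hH.eigenvalues Finset.univ_nonempty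
  set a := hH.eigenvalues i₀ with ha
  have h1 : N - a • 1 = U * Matrix.diagonal (fun i => hH.eigenvalues i - a) * star U := by
    have hd : Matrix.diagonal (fun i => hH.eigenvalues i - a)
        = Matrix.diagonal hH.eigenvalues - Matrix.diagonal (fun _ => a) :=
      (Matrix.diagonal_sub _ _).symm
    rw [hd, Matrix.mul_sub, Matrix.sub_mul, ← Matrix.smul_one_eq_diagonal,
      mul_smul_comm, smul_mul_assoc, Matrix.mul_one, hU, ← eigen_decomp hH]
  refine ⟨a, hN.eigenvalues_pos i₀, ?_, ?_⟩
  · rw [h1, Matrix.star_eq_conjTranspose]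
    exact Matrix.PosSemidef.mul_mul_conjTranspose_same
      (Matrix.posSemidef_diagonal_iff.mpr fun i => sub_nonneg.mpr (hmin i (Finset.mem_univ i))) U
  · rw [h1, Matrix.det_mul, Matrix.det_mul, Matrix.det_diagonal]
    rw [Finset.prod_eq_zero (Finset.mem_univ i₀) (sub_self a)]
    ring

end spectral


lemma posDef_smul_one {c : ℝ} (hc : 0 < c) :
    ((c • 1 : Matrix (Fin n) (Fin n) ℝ)).PosDef := by
  constructor
  · show _ = _
    rw [Matrix.conjTranspose_smul, Matrix.conjTranspose_one, star_trivial]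
  · intro x hx
    exact (Matrix.PosDef.one.smul hc).2 hx

lemma shift_posDef {N : Matrix (Fin n) (Fin n) ℝ} {a : ℝ}
    (hPSD : (N - a • 1).PosSemidef) (ha : 0 < a) {s : ℝ} (hs : s < 1) :
    (N - (s * a) • 1).PosDef := by
  have h : N - (s * a) • 1 = (N - a • 1) + ((1 - s) * a) • 1 := by
    have h1 : ((1 - s) * a) = a - s * a := by ring
    rw [h1, sub_smul]
    abel
  rw [h]
  exact Matrix.PosDef.posSemidef_add hPSD (posDef_smul_one (by nlinarith))

lemma hurwitz'_eq_zero {m k : ℕ} (h : m < k) (A B : Matrix (Fin n) (Fin n) ℝ) :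
    hurwitz' m k A B = 0 := by
  refine Finset.sum_eq_zero fun w hw => ?_
  have h1 := (Finset.mem_filter.mp hw).2
  have h2 := cnt_le w
  omega

lemma trace_pow_scalar_left (c : ℝ) (B : Matrix (Fin n) (Fin n) ℝ) (m : ℕ) :
    ((φ (c • 1) + (X : ℝ[X]) • φ B) ^ m).trace
      = ∑ i ∈ Finset.range (m+1),
          Polynomial.C ((m.choose i : ℝ) * c ^ i * ((B ^ (m-i)).trace)) * X ^ (m-i) := by
  rw [map_smul_one, (smul_one_commute (Polynomial.C c) ((X : ℝ[X]) • φ B)).add_pow, trace_sum]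
  refine Finset.sum_congr rfl fun i hi => ?_
  rw [_root_.smul_pow, one_pow, ← map_pow, smul_one_mul', _root_.smul_pow, ← map_pow φ,
    smul_mul_assoc, smul_mul_assoc, Matrix.trace_smul, Matrix.trace_smul,
    Matrix.trace_mul_comm, ← nsmul_eq_mul, Matrix.trace_smul, trace_map, smul_eq_mul,
    smul_eq_mul, nsmul_eq_mul, ← Polynomial.C_eq_natCast, _root_.map_mul, _root_.map_mul]
  ring

lemma trace_pow_scalar_right (c : ℝ) (A : Matrix (Fin n) (Fin n) ℝ) (m : ℕ) :
    ((φ A + (X : ℝ[X]) • φ (c • 1)) ^ m).trace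
      = ∑ i ∈ Finset.range (m+1),
          Polynomial.C ((m.choose i : ℝ) * c ^ i * ((A ^ (m-i)).trace)) * X ^ i := by
  rw [map_smul_one, smul_smul, add_comm,
    (smul_one_commute ((X : ℝ[X]) * Polynomial.C c) (φ A)).add_pow, trace_sum]
  refine Finset.sum_congr rfl fun i hi => ?_
  rw [_root_.smul_pow, one_pow, mul_pow, ← map_pow, smul_one_mul', ← map_pow φ,
    smul_mul_assoc, Matrix.trace_smul, Matrix.trace_mul_comm, ← nsmul_eq_mul,
    Matrix.trace_smul, trace_map, smul_eq_mul, nsmul_eq_mul, ← Polynomial.C_eq_natCast,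
    _root_.map_mul, _root_.map_mul]
  ring

lemma scalarA_pos (hn : 0 < n) {c : ℝ} (hc : 0 < c) {B : Matrix (Fin n) (Fin n) ℝ}
    (hB : B.PosDef) {m k : ℕ} (hk : k ≤ m) :
    0 < (hurwitz' m k ((c • 1 : Matrix (Fin n) (Fin n) ℝ)) B).trace := by
  rw [← coeff_trace_pow, trace_pow_scalar_left, Polynomial.finset_sum_coeff]
  simp only [Polynomial.coeff_C_mul_X_pow]
  rw [Finset.sum_eq_single (m - k)]
  · have h1 : m - (m - k) = k := by omega
    rw [h1, if_pos rfl]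
    exact mul_pos (mul_pos (by exact_mod_cast Nat.choose_pos (by omega : m - k ≤ m))
      (pow_pos hc _)) (trace_pow_pos hB hn k)
  · intro j hj hne
    have hj' := Finset.mem_range.mp hj
    rw [if_neg]
    intro hkj
    exact hne (by omega)
  · intro h
    exact absurd (Finset.mem_range.mpr (by omega)) h

lemma scalarB_pos (hn : 0 < n) {c : ℝ} (hc : 0 < c) {A : Matrix (Fin n) (Fin n) ℝ}
    (hA : A.PosDef) {m k : ℕ} (hk : k ≤ m) :
    0 < (hurwitz' m k A ((c • 1 : Matrix (Fin n) (Fin n) ℝ))).trace := by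
  rw [← coeff_trace_pow, trace_pow_scalar_right, Polynomial.finset_sum_coeff]
  simp only [Polynomial.coeff_C_mul_X_pow]
  rw [Finset.sum_eq_single k]
  · rw [if_pos rfl]
    exact mul_pos (mul_pos (by exact_mod_cast Nat.choose_pos hk)
      (pow_pos hc _)) (trace_pow_pos hA hn (m - k))
  · intro j hj hne
    rw [if_neg (fun h => hne h.symm)]
  · intro h
    exact absurd (Finset.mem_range.mpr (by omega)) h


lemma smul_uu (s a b : ℝ) :
    s • (Polynomial.C a + Polynomial.C b * X)
      = Polynomial.C (s*a) + Polynomial.C (s*b) * X := by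
  rw [smul_add, ← smul_mul_assoc, Polynomial.smul_C, Polynomial.smul_C, smul_eq_mul,
    smul_eq_mul]

lemma repr_shift (A B : Matrix (Fin n) (Fin n) ℝ) (a b s : ℝ) (p j : ℕ) :
    (((φ A + (X : ℝ[X]) • φ B)
        - (s • (Polynomial.C a + Polynomial.C b * X)) • 1) ^ p).trace.coeff j
      = (hurwitz' p j (A - (s*a) • 1) (B - (s*b) • 1)).trace := by
  rw [smul_uu, ← key_repr]

lemma gfun_poly (A B : Matrix (Fin n) (Fin n) ℝ) (a b s : ℝ) (m k : ℕ) :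
    (hurwitz' m k (A - (s*a) • 1) (B - (s*b) • 1)).trace
      = ∑ i ∈ Finset.range (m+1), ((m.choose i : ℝ) * (-1)^i
          * (((Polynomial.C a + Polynomial.C b * X) ^ i
              * ((φ A + (X : ℝ[X]) • φ B) ^ (m - i)).trace).coeff k)) * s ^ i := by
  rw [← repr_shift A B a b s m k, trace_pow_shift, Polynomial.finset_sum_coeff]
  refine Finset.sum_congr rfl fun i hi => ?_
  rw [Polynomial.coeff_smul, smul_eq_mul, neg_pow]
  ring

lemma deriv_identity (A B : Matrix (Fin n) (Fin n) ℝ) (a b s : ℝ) (m k : ℕ) (hm : 1 ≤ m) :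
    ∑ i ∈ Finset.range (m+1), ((m.choose i : ℝ) * (-1)^i
          * (((Polynomial.C a + Polynomial.C b * X) ^ i
              * ((φ A + (X : ℝ[X]) • φ B) ^ (m - i)).trace).coeff k)) * (i * s ^ (i-1))
      = -(m : ℝ) * (((Polynomial.C a + Polynomial.C b * X)
          * (((φ A + (X : ℝ[X]) • φ B)
              - (s • (Polynomial.C a + Polynomial.C b * X)) • 1) ^ (m-1)).trace).coeff k) := by
  set u : ℝ[X] := Polynomial.C a + Polynomial.C b * X with hu
  set T : ℕ → ℝ[X] := fun d => ((φ A + (X : ℝ[X]) • φ B) ^ d).trace with hT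
  have hrhs : (u * (((φ A + (X : ℝ[X]) • φ B) - (s • u) • 1) ^ (m-1)).trace).coeff k
      = ∑ i ∈ Finset.range m, (((m-1).choose i : ℝ) * (-s)^i) * ((u ^ (i+1) * T (m-(i+1))).coeff k) := by
    rw [trace_pow_shift, Nat.sub_add_cancel hm, Finset.mul_sum]
    rw [Polynomial.finset_sum_coeff]
    refine Finset.sum_congr rfl fun i hi => ?_
    rw [mul_smul_comm, ← mul_assoc, ← pow_succ', Polynomial.coeff_smul, smul_eq_mul]
    have he : m - 1 - i = m - (i+1) := by omega
    rw [he]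
  rw [hrhs, Finset.mul_sum, Finset.sum_range_succ']
  have h0 : ((m.choose 0 : ℝ) * (-1)^0 * ((u ^ 0 * T (m - 0)).coeff k)) * ((0:ℕ) * s ^ (0-1)) = 0 := by
    simp
  rw [h0, add_zero]
  refine Finset.sum_congr rfl fun i hi => ?_
  have hnat : ((m.choose (i+1) : ℝ) * ((i:ℝ)+1)) = (m : ℝ) * (((m-1).choose i : ℝ)) := by
    have h := Nat.add_one_mul_choose_eq (m-1) i
    rw [Nat.sub_add_cancel hm] at h
    exact_mod_cast h.symm
  have hsp : ((-s : ℝ))^i = (-1)^i * s^i := by rw [neg_pow]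
  push_cast
  linear_combination ((-1:ℝ)^(i+1) * s^i * ((u ^ (i+1) * T (m-(i+1))).coeff k)) * hnat
    + ((-(m:ℝ)) * (((m-1).choose i : ℝ)) * ((u ^ (i+1) * T (m-(i+1))).coeff k)) * hsp

lemma gfun_hasDeriv (A B : Matrix (Fin n) (Fin n) ℝ) (a b s : ℝ) (m k : ℕ) (hm : 1 ≤ m) :
    HasDerivAt (fun t => (hurwitz' m k (A - (t*a) • 1) (B - (t*b) • 1)).trace)
      (-(m : ℝ) * (((Polynomial.C a + Polynomial.C b * X)
          * (((φ A + (X : ℝ[X]) • φ B)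
              - (s • (Polynomial.C a + Polynomial.C b * X)) • 1) ^ (m-1)).trace).coeff k)) s := by
  have hfun : (fun t => (hurwitz' m k (A - (t*a) • 1) (B - (t*b) • 1)).trace)
      = fun t => ∑ i ∈ Finset.range (m+1), ((m.choose i : ℝ) * (-1)^i
          * (((Polynomial.C a + Polynomial.C b * X) ^ i
              * ((φ A + (X : ℝ[X]) • φ B) ^ (m - i)).trace).coeff k)) * t ^ i :=
    funext fun t => gfun_poly A B a b t m k
  rw [hfun, ← deriv_identity A B a b s m k hm]
  exact HasDerivAt.fun_sum fun i hi => (hasDerivAt_pow i s).const_mul _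


lemma hur_eq {m k : ℕ} (A B : Matrix (Fin n) (Fin n) ℝ) :
    hurwitz m k A B = hurwitz' m k A B := rfl

end HurwitzAux

open HurwitzAux

theorem reduction_to_singular_case {n m : ℕ} (hm : 1 ≤ m)
    (hprev : ∀ A B : Matrix (Fin n) (Fin n) ℝ, A.PosDef → B.PosDef →
      ∀ k ≤ m - 1, 0 < Matrix.trace (hurwitz (m - 1) k A B))
    (hsing : ∀ A B : Matrix (Fin n) (Fin n) ℝ, A.PosSemidef → B.PosSemidef →
      A ≠ 0 → B ≠ 0 → A.det = 0 → B.det = 0 →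
      ∀ k ≤ m, 0 < Matrix.trace (hurwitz m k A B)) :
    ∀ A B : Matrix (Fin n) (Fin n) ℝ, A.PosDef → B.PosDef →
      ∀ k ≤ m, 0 < Matrix.trace (hurwitz m k A B) := by
  intro A B hA hB k hk
  rcases Nat.eq_zero_or_pos n with hn0 | hn
  · exfalso
    subst hn0
    have hpd : (0 : Matrix (Fin 0) (Fin 0) ℝ).PosDef :=
      ⟨Matrix.isHermitian_zero, fun x hx => absurd (Subsingleton.elim x 0) hx⟩
    have h := hprev 0 0 hpd hpd 0 (Nat.zero_le _)
    have h2 : (hurwitz (m-1) 0 (0 : Matrix (Fin 0) (Fin 0) ℝ) 0).trace = 0 := by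
      simp [Matrix.trace]
    rw [h2] at h
    exact lt_irrefl _ h
  obtain ⟨a, ha, hApsd, hAdet⟩ := exists_sub_smul hA hn
  obtain ⟨b, hb, hBpsd, hBdet⟩ := exists_sub_smul hB hn
  by_cases hA0 : A - a • 1 = 0
  · rw [hur_eq, sub_eq_zero.mp hA0]
    exact scalarA_pos hn ha hB hk
  by_cases hB0 : B - b • 1 = 0
  · rw [hur_eq, sub_eq_zero.mp hB0]
    exact scalarB_pos hn hb hA hk
  set g : ℝ → ℝ := fun t => (hurwitz' m k (A - (t*a) • 1) (B - (t*b) • 1)).trace with hg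
  have hg1 : 0 < g 1 := by
    have := hsing (A - a • 1) (B - b • 1) hApsd hBpsd hA0 hB0 hAdet hBdet k hk
    rw [hur_eq] at this
    simpa [hg] using this
  have hderiv : ∀ s : ℝ, HasDerivAt g
      (-(m : ℝ) * (((Polynomial.C a + Polynomial.C b * X)
          * (((φ A + (X : ℝ[X]) • φ B)
              - (s • (Polynomial.C a + Polynomial.C b * X)) • 1) ^ (m-1)).trace).coeff k)) s :=
    fun s => gfun_hasDeriv A B a b s m k hm
  have hneg : ∀ s ∈ Set.Ioo (0:ℝ) 1, deriv g s < 0 := by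
    intro s hs
    rw [(hderiv s).deriv]
    have hAs : (A - (s*a) • 1).PosDef := shift_posDef hApsd ha hs.2
    have hBs : (B - (s*b) • 1).PosDef := shift_posDef hBpsd hb hs.2
    set Q : ℝ[X] :=
      (((φ A + (X : ℝ[X]) • φ B)
          - (s • (Polynomial.C a + Polynomial.C b * X)) • 1) ^ (m-1)).trace with hQ
    have hQc : ∀ j, Q.coeff j
        = (hurwitz' (m-1) j (A - (s*a) • 1) (B - (s*b) • 1)).trace :=
      fun j => repr_shift A B a b s (m-1) j
    have hQpos : ∀ j ≤ m - 1, 0 < Q.coeff j := by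
      intro j hj
      rw [hQc j, ← hur_eq]
      exact hprev _ _ hAs hBs j hj
    have hQnonneg : ∀ j, 0 ≤ Q.coeff j := by
      intro j
      rcases Nat.lt_or_ge (m-1) j with h | h
      · rw [hQc j, hurwitz'_eq_zero h, Matrix.trace_zero]
      · exact le_of_lt (hQpos j h)
    have hsplit : ((Polynomial.C a + Polynomial.C b * X) * Q).coeff k
        = a * Q.coeff k + b * ((X * Q).coeff k) := by
      rw [add_mul, Polynomial.coeff_add, Polynomial.coeff_C_mul, mul_assoc,
        Polynomial.coeff_C_mul]
    rw [hsplit]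
    have hmain : 0 < a * Q.coeff k + b * ((X * Q).coeff k) := by
      rcases Nat.eq_zero_or_pos k with hk0 | hk1
      · subst hk0
        have hX0 : ((X : ℝ[X]) * Q).coeff 0 = 0 := by
          rw [Polynomial.mul_coeff_zero, Polynomial.coeff_X_zero, zero_mul]
        rw [hX0, mul_zero, add_zero]
        exact mul_pos ha (hQpos 0 (Nat.zero_le _))
      · obtain ⟨j, rfl⟩ : ∃ j, k = j + 1 := ⟨k - 1, by omega⟩
        have hXk : ((X : ℝ[X]) * Q).coeff (j+1) = Q.coeff j := Polynomial.coeff_X_mul Q j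
        rw [hXk]
        have h2 : 0 < b * Q.coeff j := mul_pos hb (hQpos j (by omega))
        have h1 : 0 ≤ a * Q.coeff (j+1) := mul_nonneg (le_of_lt ha) (hQnonneg _)
        linarith
    nlinarith [hmain, (by exact_mod_cast hm : (1:ℝ) ≤ (m:ℝ))]
  have hcont : ContinuousOn g (Set.Icc (0:ℝ) 1) :=
    fun s _ => ((hderiv s).differentiableAt.continuousAt).continuousWithinAt
  have hanti : StrictAntiOn g (Set.Icc (0:ℝ) 1) := by
    apply strictAntiOn_of_deriv_neg (convex_Icc 0 1) hcont
    intro s hs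
    rw [interior_Icc] at hs
    exact hneg s hs
  have h01 : g 1 < g 0 :=
    hanti (Set.mem_Icc.mpr ⟨le_refl 0, zero_le_one⟩)
      (Set.mem_Icc.mpr ⟨zero_le_one, le_refl 1⟩) zero_lt_one
  have hg0 : g 0 = (hurwitz m k A B).trace := by
    rw [hur_eq]
    simp [hg]
  rw [← hg0]
  exact lt_trans hg1 h01
end

section
/- Let r, x, y, z, u, b be nonnegative real numbers with b > 0 and u > 0. Let A = diag(1, r, 0) and let B be the real symmetric 3-by-3 matrix with rows ((x²+u²)/b, x, −z), (x, b, y), (−z, y, (x²y² + u²y² + 2xbzy + z²b²)/(u²b)). Then b³u²·Tr[S_{6,3}(A,B)] + 12·b³u²·x·y·z·(r² + r + 1) ≥ 0; that is, the only negative terms of the polynomial p(r,x,y,z,u,b) = b³u²·Tr[S_{6,3}(A,B)] are −12·b³u²·x·z·y·(r² + r + 1). -/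
lemma hurwitz_six_three {R : Type*} [CommRing R] {n : ℕ} (A B : Matrix (Fin n) (Fin n) R) :
    hurwitz 6 3 A B =
    B*B*B*A*A*A + B*B*A*B*A*A + B*B*A*A*B*A + B*B*A*A*A*B +
    B*A*B*B*A*A + B*A*B*A*B*A + B*A*B*A*A*B + B*A*A*B*B*A + B*A*A*B*A*B + B*A*A*A*B*B +
    A*B*B*B*A*A + A*B*B*A*B*A + A*B*B*A*A*B + A*B*A*B*B*A + A*B*A*B*A*B + A*B*A*A*B*B +
    A*A*B*B*B*A + A*A*B*B*A*B + A*A*B*A*B*B + A*A*A*B*B*B := by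
  unfold hurwitz
  rw [show (Finset.univ.filter
      (fun w : Fin 6 → Bool => (Finset.univ.filter (fun i => w i = true)).card = 3)) =
  ({![true,true,true,false,false,false],
 ![true,true,false,true,false,false],
 ![true,true,false,false,true,false],
 ![true,true,false,false,false,true],
 ![true,false,true,true,false,false],
 ![true,false,true,false,true,false],
 ![true,false,true,false,false,true],
 ![true,false,false,true,true,false],
 ![true,false,false,true,false,true],
 ![true,false,false,false,true,true],
 ![false,true,true,true,false,false],
 ![false,true,true,false,true,false],
 ![false,true,true,false,false,true],
 ![false,true,false,true,true,false],
 ![false,true,false,true,false,true],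
 ![false,true,false,false,true,true],
 ![false,false,true,true,true,false],
 ![false,false,true,true,false,true],
 ![false,false,true,false,true,true],
 ![false,false,false,true,true,true]} : Finset (Fin 6 → Bool)) from by decide]
  repeat rw [Finset.sum_insert (by decide)]
  rw [Finset.sum_singleton]
  simp only [List.ofFn_succ, List.ofFn_zero, List.prod_cons, List.prod_nil,
    Matrix.cons_val_zero, Matrix.cons_val_one, Matrix.head_cons, Fin.succ_zero_eq_one,
    Matrix.cons_val_succ, if_true, if_false, Bool.cond_true, Bool.cond_false, mul_one,
    ite_true, ite_false]
  noncomm_ring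

set_option maxHeartbeats 4000000 in
lemma trace_key (r x y z u b : ℝ) (hu : u ≠ 0) (hb : b ≠ 0) :
    b ^ 3 * u ^ 2 * Matrix.trace (hurwitz 6 3 (!![(1:ℝ),0,0; 0,r,0; 0,0,0])
      (!![(x ^ 2 + u ^ 2) / b, x, -z;
          x, b, y;
          -z, y, (x ^ 2 * y ^ 2 + u ^ 2 * y ^ 2 + 2 * x * b * z * y +
            z ^ 2 * b ^ 2) / (u ^ 2 * b)])) +
      12 * b ^ 3 * u ^ 2 * x * y * z * (r ^ 2 + r + 1) =
    20*u^8 + 24*z^2*u^4*b^2 + 6*z^4*b^4 + 6*y^2*z^2*u^2*b^2 + 12*x*y*z^3*b^3 + 6*x^2*u^2*b^4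
      + 24*x^2*u^4*b^2 + 60*x^2*u^6 + 24*x^2*z^2*u^2*b^2 + 6*x^2*y^2*z^2*b^2 + 24*x^4*u^2*b^2
      + 60*x^4*u^4 + 20*x^6*u^2 + 12*r*x^2*u^2*b^4 + 18*r*x^2*u^4*b^2 + 18*r*x^4*u^2*b^2
      + 18*r^2*x^2*u^2*b^4 + 12*r^2*x^2*u^4*b^2 + 12*r^2*x^4*u^2*b^2 + 20*r^3*u^2*b^6
      + 24*r^3*y^2*u^2*b^4 + 6*r^3*y^4*u^2*b^2 + 12*r^3*x*y^3*z*b^3 + 24*r^3*x^2*u^2*b^4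
      + 6*r^3*x^2*y^4*b^2 + 6*r^3*x^4*u^2*b^2 + 6*r^3*(x*u^2*b - y*z*b^2)^2 := by
  rw [hurwitz_six_three]
  simp only [Matrix.mul_fin_three, mul_zero, zero_mul, add_zero, zero_add, mul_one, one_mul,
    Matrix.trace_add, Matrix.trace_fin_three_of]
  field_simp
  ring

theorem negative_terms_bound (r x y z u b : ℝ)
    (hr : 0 ≤ r) (hx : 0 ≤ x) (hy : 0 ≤ y) (hz : 0 ≤ z) (hu : 0 < u) (hb : 0 < b)
    (A : Matrix (Fin 3) (Fin 3) ℝ) (hA : A = Matrix.diagonal ![1, r, 0])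
    (B : Matrix (Fin 3) (Fin 3) ℝ)
    (hB : B = !![(x ^ 2 + u ^ 2) / b, x, -z;
                  x, b, y;
                  -z, y, (x ^ 2 * y ^ 2 + u ^ 2 * y ^ 2 + 2 * x * b * z * y +
                    z ^ 2 * b ^ 2) / (u ^ 2 * b)]) :
    0 ≤ b ^ 3 * u ^ 2 * Matrix.trace (hurwitz 6 3 A B) +
        12 * b ^ 3 * u ^ 2 * x * y * z * (r ^ 2 + r + 1) := by
  have hA' : A = !![(1:ℝ),0,0; 0,r,0; 0,0,0] := by
    rw [hA]; ext i j; fin_cases i <;> fin_cases j <;>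
      simp [Matrix.diagonal_apply, Matrix.vecHead, Matrix.vecTail]
  rw [hA', hB, trace_key r x y z u b hu.ne' hb.ne']
  have h1 : (0:ℝ) ≤ 6*r^3*(x*u^2*b - y*z*b^2)^2 := by positivity
  have hu' := hu.le
  have hb' := hb.le
  repeat' apply add_nonneg
  all_goals first
    | positivity
    | (repeat' apply mul_nonneg) <;>
        first | assumption | positivity
end

section
/- Let B be the real 3-by-3 matrix with rows (−2, 1, 0), (−1, 2, 3), (1, −1, 3) and let A = diag(1, x₁, x₂). Then Tr[S_{4,2}(A,B)] = 20 − 4x₁ + 8x₁² − 12x₁x₂ + 42x₂² and Tr[S_{3,2}(A,B)] = 9 + 18x₂ as polynomials in x₁, x₂. Moreover, the minimum of Tr[S_{4,2}(A,B)] over (x₁,x₂) ∈ [0,1]² is achieved at x₁ = 7/25, x₂ = 1/25, and with A' = diag(1, 7/25, 1/25) one has Tr[S_{4,2}(A',B)] = 2·Tr[S_{3,2}(A',B)] = 486/25. -/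
private lemma hurwitz_diag (x₁ x₂ : ℝ) :
    Matrix.diagonal ![1, x₁, x₂] = !![1,0,0;0,x₁,0;0,0,x₂] := by
  ext i j
  fin_cases i <;> fin_cases j <;>
    simp [Matrix.diagonal_apply, Matrix.vecHead, Matrix.vecTail]

private lemma hurwitz42 (x₁ x₂ : ℝ) :
    Matrix.trace (hurwitz 4 2 (Matrix.diagonal ![1, x₁, x₂]) !![-2, 1, 0; -1, 2, 3; 1, -1, 3]) =
      20 - 4 * x₁ + 8 * x₁ ^ 2 - 12 * x₁ * x₂ + 42 * x₂ ^ 2 := by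
  rw [hurwitz, show (Finset.univ.filter
      (fun w : Fin 4 → Bool => (Finset.univ.filter (fun i => w i = true)).card = 2)) =
    {![true,true,false,false], ![true,false,true,false], ![true,false,false,true],
     ![false,true,true,false], ![false,true,false,true], ![false,false,true,true]} from by decide]
  rw [Finset.sum_insert, Finset.sum_insert, Finset.sum_insert, Finset.sum_insert,
    Finset.sum_insert, Finset.sum_singleton]
  · simp only [List.ofFn_succ, List.ofFn_zero, Matrix.cons_val_zero, Matrix.cons_val_one,
      Matrix.head_cons, Matrix.cons_val_succ, List.prod_cons, List.prod_nil,
      Bool.false_eq_true, if_true, if_false, ite_false, ite_true, mul_one, hurwitz_diag]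
    simp only [Matrix.mul_fin_three, Matrix.trace_add, Matrix.trace_fin_three_of]
    ring
  all_goals decide

private lemma hurwitz32 (x₁ x₂ : ℝ) :
    Matrix.trace (hurwitz 3 2 (Matrix.diagonal ![1, x₁, x₂]) !![-2, 1, 0; -1, 2, 3; 1, -1, 3]) =
      9 + 18 * x₂ := by
  rw [hurwitz, show (Finset.univ.filter
      (fun w : Fin 3 → Bool => (Finset.univ.filter (fun i => w i = true)).card = 2)) =
    {![true,true,false], ![true,false,true], ![false,true,true]} from by decide]
  rw [Finset.sum_insert, Finset.sum_insert, Finset.sum_singleton]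
  · simp only [List.ofFn_succ, List.ofFn_zero, Matrix.cons_val_zero, Matrix.cons_val_one,
      Matrix.head_cons, Matrix.cons_val_succ, List.prod_cons, List.prod_nil,
      Bool.false_eq_true, if_true, if_false, ite_false, ite_true, mul_one, hurwitz_diag]
    simp only [Matrix.mul_fin_three, Matrix.trace_add, Matrix.trace_fin_three_of]
    ring
  all_goals decide

theorem hurwitz_example (B : Matrix (Fin 3) (Fin 3) ℝ)
    (hB : B = !![-2, 1, 0; -1, 2, 3; 1, -1, 3])
    (A' : Matrix (Fin 3) (Fin 3) ℝ)
    (hA' : A' = Matrix.diagonal ![1, 7 / 25, 1 / 25]) :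
    (∀ x₁ x₂ : ℝ,
        Matrix.trace (hurwitz 4 2 (Matrix.diagonal ![1, x₁, x₂]) B) =
          20 - 4 * x₁ + 8 * x₁ ^ 2 - 12 * x₁ * x₂ + 42 * x₂ ^ 2) ∧
      (∀ x₁ x₂ : ℝ,
        Matrix.trace (hurwitz 3 2 (Matrix.diagonal ![1, x₁, x₂]) B) =
          9 + 18 * x₂) ∧
      (∀ x₁ x₂ : ℝ, x₁ ∈ Set.Icc (0 : ℝ) 1 → x₂ ∈ Set.Icc (0 : ℝ) 1 →
        Matrix.trace (hurwitz 4 2 A' B) ≤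
          Matrix.trace (hurwitz 4 2 (Matrix.diagonal ![1, x₁, x₂]) B)) ∧
      Matrix.trace (hurwitz 4 2 A' B) = 486 / 25 ∧
      Matrix.trace (hurwitz 4 2 A' B) = 2 * Matrix.trace (hurwitz 3 2 A' B) := by
  subst hB hA'
  have h4 := hurwitz42
  have h3 := hurwitz32
  have h4' := hurwitz42 (7/25) (1/25)
  have h3' := hurwitz32 (7/25) (1/25)
  refine ⟨h4, h3, ?_, ?_, ?_⟩
  · intro x₁ x₂ _ _
    rw [h4 x₁ x₂, h4]
    nlinarith [sq_nonneg (4*(x₁ - 7/25) - 3*(x₂ - 1/25)), sq_nonneg (x₂ - 1/25)]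
  · rw [h4']; norm_num
  · rw [h4', h3']; norm_num
end
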